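/- arXiv:2510.23762 — 4 statements merged into one kernel-verified Lean document; each statement's English description precedes it below -/
import Mathlib

section
/- Let W be a nonnegative random variable supported on {0} ∪ [d_L, d_U] with 0 < d_L ≤ d_U < ∞, P(W > 0) > 0, and Var(W) > 0. Then ∫_{d_L}^{d_U} q₁(w) dw + q₀ = 1, where q₁(w) = (E[W | W ≥ w] − E[W])·P(W ≥ w)/Var(W) and q₀ = (E[W | W > 0] − E[W])·P(W > 0)·d_L/Var(W). -/
open MeasureTheory Set

/-- for W ≥ 0 supported on {0} ∪ [d_L,d_U] with Var(W) > 0,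
∫_{d_L}^{d_U} q₁(w) dw + q₀ = 1, where
q₁(w) = (E[W|W ≥ w] − E[W])·P(W ≥ w)/Var(W) and
q₀ = (E[W|W > 0] − E[W])·P(W > 0)·d_L/Var(W). -/
theorem stmt5
    {α : Type*} [MeasurableSpace α] (μ : Measure α) [IsProbabilityMeasure μ]
    (W : α → ℝ) (hWmeas : Measurable W)
    (dL dU : ℝ) (hdL : 0 < dL) (hdLU : dL ≤ dU)
    (hval : ∀ᵐ ω ∂μ, W ω = 0 ∨ W ω ∈ Set.Icc dL dU)
    (hpos : 0 < (μ {ω | 0 < W ω}).toReal)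
    (hW2 : Integrable (fun ω => (W ω) ^ 2) μ) (hWint : Integrable W μ)
    (hVar : 0 < (∫ ω, (W ω) ^ 2 ∂μ) - (∫ ω, W ω ∂μ) ^ 2) :
    (∫ w in dL..dU,
        ((∫ ω in {ω | w ≤ W ω}, W ω ∂μ) / (μ {ω | w ≤ W ω}).toReal
            - ∫ ω, W ω ∂μ) * (μ {ω | w ≤ W ω}).toReal /
          ((∫ ω, (W ω) ^ 2 ∂μ) - (∫ ω, W ω ∂μ) ^ 2))
      + ((∫ ω in {ω | 0 < W ω}, W ω ∂μ) / (μ {ω | 0 < W ω}).toReal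
            - ∫ ω, W ω ∂μ) * (μ {ω | 0 < W ω}).toReal * dL /
          ((∫ ω, (W ω) ^ 2 ∂μ) - (∫ ω, W ω ∂μ) ^ 2) = 1 := by
  set m := ∫ ω, W ω ∂μ with hm
  set V := (∫ ω, (W ω) ^ 2 ∂μ) - m ^ 2 with hVdef
  have hVne : V ≠ 0 := ne_of_gt hVar
  have hmeas0 : MeasurableSet {ω | 0 < W ω} := measurableSet_lt measurable_const hWmeas
  have hmeass : ∀ w : ℝ, MeasurableSet {ω | w ≤ W ω} := fun w =>
    measurableSet_le measurable_const hWmeas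
  set p := (μ {ω | 0 < W ω}).toReal with hpdef
  have hp : p ≠ 0 := ne_of_gt hpos
  -- ∫_{W>0} W = m
  have hindic : (fun ω => ({ω | 0 < W ω}).indicator W ω) =ᵐ[μ] W := by
    filter_upwards [hval] with ω h
    rcases h with h0 | h1
    · simp [Set.indicator_apply, h0]
    · have hw : 0 < W ω := lt_of_lt_of_le hdL h1.1
      simp [Set.indicator_apply, hw]
  have hint0 : ∫ ω in {ω | 0 < W ω}, W ω ∂μ = m := by
    rw [← integral_indicator hmeas0]
    exact integral_congr_ae hindic
  -- pointwise rewrite of the integrand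
  have hptw : ∀ w : ℝ,
      ((∫ ω in {ω | w ≤ W ω}, W ω ∂μ) / (μ {ω | w ≤ W ω}).toReal - m) *
          (μ {ω | w ≤ W ω}).toReal / V
        = (∫ ω in {ω | w ≤ W ω}, (W ω - m) ∂μ) / V := by
    intro w
    have hsub : ∫ ω in {ω | w ≤ W ω}, (W ω - m) ∂μ
        = (∫ ω in {ω | w ≤ W ω}, W ω ∂μ) - m * (μ {ω | w ≤ W ω}).toReal := by
      rw [integral_sub hWint.restrict (integrable_const m), setIntegral_const]
      simp [smul_eq_mul, mul_comm, measureReal_def]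
    rcases eq_or_ne ((μ {ω | w ≤ W ω}).toReal) 0 with h0 | h0
    · have hnull : μ {ω | w ≤ W ω} = 0 := by
        have := measure_ne_top μ {ω | w ≤ W ω}
        simpa [ENNReal.toReal_eq_zero_iff, this] using h0
      rw [hsub, h0, Measure.restrict_eq_zero.mpr hnull]
      simp
    · rw [hsub, sub_mul, div_mul_cancel₀ _ h0]
  -- Fubini
  set F : ℝ × α → ℝ := fun q => if q.1 ≤ W q.2 then W q.2 - m else 0 with hF
  have hmeasF : Measurable F := by
    have hset : MeasurableSet {q : ℝ × α | q.1 ≤ W q.2} :=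
      measurableSet_le measurable_fst (hWmeas.comp measurable_snd)
    exact Measurable.ite hset ((hWmeas.comp measurable_snd).sub measurable_const)
      measurable_const
  have hintF : Integrable F ((volume.restrict (Set.Ioc dL dU)).prod μ) := by
    have hbound : Integrable (fun q : ℝ × α => ‖W q.2‖ + ‖m‖)
        ((volume.restrict (Set.Ioc dL dU)).prod μ) := by
      have hbm : Measurable fun q : ℝ × α => ‖W q.2‖ + ‖m‖ :=
        ((hWmeas.comp measurable_snd).norm.add measurable_const)
      rw [integrable_prod_iff hbm.aestronglyMeasurable]
      constructor
      · exact Filter.Eventually.of_forall fun w => hWint.norm.add (integrable_const _)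
      · exact integrable_const (∫ ω, ‖(‖W ω‖ + ‖m‖)‖ ∂μ)
    apply hbound.mono' hmeasF.aestronglyMeasurable
    refine Filter.Eventually.of_forall fun q => ?_
    simp only [hF]
    split_ifs with h
    · exact norm_sub_le _ _
    · simp only [norm_zero]; positivity
  have hswap : ∫ w in Set.Ioc dL dU, (∫ ω, F (w, ω) ∂μ)
      = ∫ ω, (∫ w in Set.Ioc dL dU, F (w, ω)) ∂μ :=
    integral_integral_swap (by exact hintF)
  -- inner integral over ω for fixed w
  have hinner1 : ∀ w : ℝ, (∫ ω, F (w, ω) ∂μ) = ∫ ω in {ω | w ≤ W ω}, (W ω - m) ∂μ := by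
    intro w
    rw [← integral_indicator (hmeass w)]
    refine integral_congr_ae (Filter.Eventually.of_forall fun ω => ?_)
    simp [hF, Set.indicator_apply]
  -- inner integral over w for fixed ω, a.e.
  have hinner2 : (fun ω => ∫ w in Set.Ioc dL dU, F (w, ω)) =ᵐ[μ]
      (fun ω => (W ω) ^ 2 - (m + dL) * W ω
        + m * dL * Set.indicator {ω | 0 < W ω} (fun _ => (1:ℝ)) ω) := by
    filter_upwards [hval] with ω h
    have hcalc : (∫ w in Set.Ioc dL dU, F (w, ω))
        = ∫ w in Set.Ioc dL dU, (Set.Iic (W ω)).indicator (fun _ => W ω - m) w := by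
      refine integral_congr_ae (Filter.Eventually.of_forall fun w => ?_)
      simp [hF, Set.indicator_apply, Set.mem_Iic]
    rw [hcalc, setIntegral_indicator measurableSet_Iic, Set.Ioc_inter_Iic,
      setIntegral_const, measureReal_def, Real.volume_Ioc, smul_eq_mul]
    rcases h with h0 | h1
    · have hmin : min dU (W ω) = 0 := by rw [h0]; exact min_eq_right (le_trans hdL.le hdLU)
      have hnot : ω ∉ {ω | 0 < W ω} := by simp [h0]
      rw [hmin, ENNReal.ofReal_eq_zero.mpr (by linarith : (0:ℝ) - dL ≤ 0),
        ENNReal.toReal_zero, zero_mul, Set.indicator_of_notMem hnot, h0]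
      ring
    · have hmin : min dU (W ω) = W ω := min_eq_right h1.2
      have hw : 0 < W ω := lt_of_lt_of_le hdL h1.1
      rw [hmin, ENNReal.toReal_ofReal (by linarith [h1.1] : (0:ℝ) ≤ W ω - dL)]
      rw [Set.indicator_of_mem (by exact hw : ω ∈ {ω | 0 < W ω})]
      ring
  -- compute the total integral
  have htotal : ∫ ω, (∫ w in Set.Ioc dL dU, F (w, ω)) ∂μ
      = (∫ ω, (W ω) ^ 2 ∂μ) - (m + dL) * m + m * dL * p := by
    rw [integral_congr_ae hinner2]
    have hi1 : Integrable (fun ω => (W ω) ^ 2 - (m + dL) * W ω) μ :=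
      hW2.sub (hWint.const_mul _)
    have hi2 : Integrable (fun ω => m * dL * Set.indicator {ω | 0 < W ω} (fun _ => (1:ℝ)) ω) μ :=
      ((integrable_const (1:ℝ)).indicator hmeas0).const_mul _
    rw [show (fun ω => (W ω) ^ 2 - (m + dL) * W ω
        + m * dL * Set.indicator {ω | 0 < W ω} (fun _ => (1:ℝ)) ω)
      = (fun ω => ((W ω) ^ 2 - (m + dL) * W ω)
        + (m * dL * Set.indicator {ω | 0 < W ω} (fun _ => (1:ℝ)) ω)) from rfl]
    rw [integral_add hi1 hi2, integral_sub hW2 (hWint.const_mul _), integral_const_mul,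
      integral_const_mul, integral_indicator_const _ hmeas0]
    simp [hpdef, smul_eq_mul, measureReal_def, ← hm]
  -- put main integral together
  have hmain : (∫ w in dL..dU,
      ((∫ ω in {ω | w ≤ W ω}, W ω ∂μ) / (μ {ω | w ≤ W ω}).toReal - m) *
        (μ {ω | w ≤ W ω}).toReal / V)
      = ((∫ ω, (W ω) ^ 2 ∂μ) - (m + dL) * m + m * dL * p) / V := by
    rw [intervalIntegral.integral_congr (fun w _ => hptw w)]
    rw [intervalIntegral.integral_div, intervalIntegral.integral_of_le hdLU]
    rw [show (∫ w in Set.Ioc dL dU, ∫ ω in {ω | w ≤ W ω}, (W ω - m) ∂μ)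
        = ∫ w in Set.Ioc dL dU, (∫ ω, F (w, ω) ∂μ) from by
      refine setIntegral_congr_fun measurableSet_Ioc fun w _ => (hinner1 w).symm]
    rw [hswap, htotal]
  -- q₀ term
  have hq0 : (m / p - m) * p * dL / V = (m - m * p) * dL / V := by
    rw [sub_mul, div_mul_cancel₀ _ hp]
  rw [hmain, hint0, hq0]
  rw [← add_div, div_eq_one_iff_eq hVne]
  rw [hVdef]
  ring
end

section
/- Let W be supported on {0} ∪ [d_L, d_U] with finite variance, and let m : [0, d_U] → ℝ be continuously differentiable on [d_L, d_U] (m(w) = E[Y | W = w]). Then Cov(Y, W)/Var(W) = ∫_{d_L}^{d_U} q₁(w) m'(w) dw + q₀ · (m(d_L) − m(0))/d_L, where q₁(w) = (E[W|W ≥ w] − E[W])P(W ≥ w)/Var(W) and q₀ = (E[W|W>0] − E[W])P(W>0)d_L/Var(W). -/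
open MeasureTheory Set

/-- continuous-treatment decomposition. For W supported on
{0} ∪ [d_L,d_U] with P(W=0) > 0 and Var(W) > 0, and m(w) = E[Y|W=w] C¹ on
[d_L,d_U],
Cov(Y,W)/Var(W) = ∫_{d_L}^{d_U} q₁(w) m'(w) dw + q₀·(m(d_L) − m(0))/d_L. -/
theorem stmt9
    {α : Type*} [MeasurableSpace α] (μ : Measure α) [IsProbabilityMeasure μ]
    (W Y : α → ℝ) (hWmeas : Measurable W) (hYmeas : Measurable Y)
    (dL dU : ℝ) (hdL : 0 < dL) (hdLU : dL ≤ dU)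
    (hval : ∀ᵐ ω ∂μ, W ω = 0 ∨ W ω ∈ Set.Icc dL dU)
    (hp0 : 0 < (μ {ω | W ω = 0}).toReal)
    (hppos : 0 < (μ {ω | 0 < W ω}).toReal)
    (hW2 : Integrable (fun ω => (W ω) ^ 2) μ) (hWint : Integrable W μ)
    (hY2 : Integrable (fun ω => (Y ω) ^ 2) μ) (hYint : Integrable Y μ)
    (hVar : 0 < (∫ ω, (W ω) ^ 2 ∂μ) - (∫ ω, W ω ∂μ) ^ 2)
    (m m' : ℝ → ℝ)
    -- m is the conditional mean function of Y given W:
    (hm : ∀ φ : ℝ → ℝ, Measurable φ → (∀ x, |φ x| ≤ 1) →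
      (∫ ω, Y ω * φ (W ω) ∂μ) = ∫ ω, m (W ω) * φ (W ω) ∂μ)
    (hderiv : ∀ w ∈ Set.Icc dL dU, HasDerivAt m (m' w) w)
    (hm'cont : ContinuousOn m' (Set.Icc dL dU)) :
    ((∫ ω, Y ω * W ω ∂μ) - (∫ ω, Y ω ∂μ) * (∫ ω, W ω ∂μ)) /
        ((∫ ω, (W ω) ^ 2 ∂μ) - (∫ ω, W ω ∂μ) ^ 2)
      = (∫ w in dL..dU,
          ((∫ ω in {ω | w ≤ W ω}, W ω ∂μ) / (μ {ω | w ≤ W ω}).toReal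
              - ∫ ω, W ω ∂μ) * (μ {ω | w ≤ W ω}).toReal /
            ((∫ ω, (W ω) ^ 2 ∂μ) - (∫ ω, W ω ∂μ) ^ 2) * m' w)
        + ((∫ ω in {ω | 0 < W ω}, W ω ∂μ) / (μ {ω | 0 < W ω}).toReal
              - ∫ ω, W ω ∂μ) * (μ {ω | 0 < W ω}).toReal * dL /
            ((∫ ω, (W ω) ^ 2 ∂μ) - (∫ ω, W ω ∂μ) ^ 2)
          * ((m dL - m 0) / dL) := by
  have hdU : 0 < dU := lt_of_lt_of_le hdL hdLU
  set E := ∫ ω, W ω ∂μ with hEdef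
  set V := (∫ ω, (W ω) ^ 2 ∂μ) - E ^ 2 with hVdef
  have hVne : V ≠ 0 := ne_of_gt hVar
  -- clamp function
  set c : ℝ → ℝ := fun x => max dL (min x dU) with hcdef
  have hc_mem : ∀ x, c x ∈ Icc dL dU := fun x =>
    ⟨le_max_left _ _, max_le hdLU (min_le_right _ _)⟩
  have hc_cont : Continuous c := continuous_const.max (continuous_id.min continuous_const)
  have hc_id : ∀ x ∈ Icc dL dU, c x = x := by
    intro x hx
    simp only [hcdef]
    rw [min_eq_left hx.2, max_eq_right hx.1]
  set M : ℝ → ℝ := fun w => m' (c w) with hMdef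
  have hMcont : Continuous M := hm'cont.comp_continuous hc_cont hc_mem
  have hMeq : ∀ w ∈ Icc dL dU, M w = m' w := by
    intro w hw; simp only [hMdef]; rw [hc_id w hw]
  obtain ⟨C₀, hC₀⟩ := isCompact_Icc.exists_bound_of_continuousOn hm'cont
  set C := max C₀ 0 with hCdef
  have hC0 : 0 ≤ C := le_max_right _ _
  have hCbd : ∀ w, |M w| ≤ C := by
    intro w
    calc |M w| = ‖m' (c w)‖ := rfl
    _ ≤ C₀ := hC₀ _ (hc_mem w)
    _ ≤ C := le_max_left _ _
  have hm_contOn : ContinuousOn m (Icc dL dU) := fun x hx =>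
    (hderiv x hx).continuousAt.continuousWithinAt
  set mt : ℝ → ℝ := fun x => if x = 0 then m 0 else m (c x) with hmtdef
  have hmt_meas : Measurable mt := by
    apply Measurable.ite
    · exact measurableSet_eq
    · exact measurable_const
    · exact (hm_contOn.comp_continuous hc_cont hc_mem).measurable
  obtain ⟨Cm₀, hCm₀⟩ := isCompact_Icc.exists_bound_of_continuousOn hm_contOn
  set Cm := max Cm₀ |m 0| with hCmdef
  have hCmbd : ∀ x, |mt x| ≤ Cm := by
    intro x
    by_cases hx : x = 0
    · simp only [hmtdef, if_pos hx]; exact le_max_right _ _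
    · simp only [hmtdef, if_neg hx]
      calc |m (c x)| = ‖m (c x)‖ := rfl
      _ ≤ Cm₀ := hCm₀ _ (hc_mem x)
      _ ≤ Cm := le_max_left _ _
  -- mt agrees with m on the support
  have hmtW : ∀ᵐ ω ∂μ, mt (W ω) = m (W ω) := by
    filter_upwards [hval] with ω hω
    rcases hω with h0 | hIcc
    · rw [h0]; simp only [hmtdef, if_pos rfl]
    · have hne : W ω ≠ 0 := ne_of_gt (lt_of_lt_of_le hdL hIcc.1)
      simp only [hmtdef, if_neg hne]; rw [hc_id _ hIcc]
  -- E[Y] = E[mt(W)]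
  have hEY : (∫ ω, Y ω ∂μ) = ∫ ω, mt (W ω) ∂μ := by
    have h1 := hm (fun _ => 1) measurable_const (fun x => by norm_num)
    simp only [mul_one] at h1
    rw [h1]
    exact integral_congr_ae (hmtW.mono fun ω h => h.symm)
  -- E[YW] = E[mt(W) W]
  have hEYW : (∫ ω, Y ω * W ω ∂μ) = ∫ ω, mt (W ω) * W ω ∂μ := by
    set φ : ℝ → ℝ := fun x => min (max (x / dU) 0) 1 with hφdef
    have hφmeas : Measurable φ :=
      ((measurable_id.div_const dU).max measurable_const).min measurable_const
    have hφbd : ∀ x, |φ x| ≤ 1 := by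
      intro x
      rw [abs_le]
      constructor
      · have : (0:ℝ) ≤ φ x := le_min (le_max_right _ _) zero_le_one
        linarith
      · exact min_le_right _ _
    have hφW : ∀ᵐ ω ∂μ, φ (W ω) = W ω / dU := by
      filter_upwards [hval] with ω hω
      rcases hω with h0 | hIcc
      · rw [h0]; simp [hφdef]
      · have h1 : 0 ≤ W ω / dU := div_nonneg (le_of_lt (lt_of_lt_of_le hdL hIcc.1)) hdU.le
        have h2 : W ω / dU ≤ 1 := (div_le_one hdU).mpr hIcc.2
        simp only [hφdef]
        rw [max_eq_left h1, min_eq_left h2]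
    have h1 := hm φ hφmeas hφbd
    have h2 : (∫ ω, Y ω * φ (W ω) ∂μ) = (∫ ω, Y ω * W ω ∂μ) / dU := by
      rw [← integral_div]
      apply integral_congr_ae
      filter_upwards [hφW] with ω h
      rw [h, mul_div_assoc]
    have h3 : (∫ ω, m (W ω) * φ (W ω) ∂μ) = (∫ ω, mt (W ω) * W ω ∂μ) / dU := by
      rw [← integral_div]
      apply integral_congr_ae
      filter_upwards [hφW, hmtW] with ω h h'
      rw [h, ← h', mul_div_assoc]
    rw [h2, h3] at h1
    field_simp at h1
    exact h1
  -- Integrability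
  have int_mtW : Integrable (fun ω => mt (W ω)) μ := by
    refine Integrable.mono' (integrable_const Cm)
      ((hmt_meas.comp hWmeas).aestronglyMeasurable)
      (Filter.Eventually.of_forall fun ω => ?_)
    simpa [Real.norm_eq_abs] using hCmbd (W ω)
  have int_mtWW : Integrable (fun ω => mt (W ω) * W ω) μ := by
    refine Integrable.mono' (hWint.abs.const_mul Cm)
      (((hmt_meas.comp hWmeas).mul hWmeas).aestronglyMeasurable)
      (Filter.Eventually.of_forall fun ω => ?_)
    rw [Real.norm_eq_abs, abs_mul]
    exact mul_le_mul_of_nonneg_right (hCmbd _) (abs_nonneg _)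
  have int_WsubE : Integrable (fun ω => W ω - E) μ := hWint.sub (integrable_const E)
  -- product setup
  set ν : Measure ℝ := volume.restrict (Ioc dL dU) with hνdef
  have hνfin : IsFiniteMeasure ν := by
    constructor
    rw [hνdef, Measure.restrict_apply_univ]
    exact measure_Ioc_lt_top
  set F : α × ℝ → ℝ := fun p => if p.2 ≤ W p.1 then M p.2 * (W p.1 - E) else 0 with hFdef
  have hFmeas : Measurable F := by
    apply Measurable.ite
    · exact measurableSet_le measurable_snd (hWmeas.comp measurable_fst)
    · exact (hMcont.measurable.comp measurable_snd).mul
        ((hWmeas.comp measurable_fst).sub measurable_const)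
    · exact measurable_const
  have hFint : Integrable F (μ.prod ν) := by
    have hg : Integrable (fun p : α × ℝ => |W p.1 - E| * C) (μ.prod ν) :=
      Integrable.mul_prod int_WsubE.abs (integrable_const C)
    refine hg.mono' hFmeas.aestronglyMeasurable
      (Filter.Eventually.of_forall fun p => ?_)
    simp only [hFdef]
    by_cases h : p.2 ≤ W p.1
    · rw [if_pos h, Real.norm_eq_abs, abs_mul, mul_comm]
      exact mul_le_mul_of_nonneg_left (hCbd _) (abs_nonneg _)
    · rw [if_neg h]
      simp only [norm_zero]
      exact mul_nonneg (abs_nonneg _) hC0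
  set G : α → ℝ := fun ω => ∫ w, F (ω, w) ∂ν with hGdef
  have hGint : Integrable G μ := hFint.integral_prod_left
  -- FTC
  have hFTC : ∀ x ∈ Icc dL dU, (∫ w in dL..x, m' w) = m x - m dL := by
    intro x hx
    apply intervalIntegral.integral_eq_sub_of_hasDerivAt
    · intro w hw
      rw [uIcc_of_le hx.1] at hw
      exact hderiv w (Icc_subset_Icc le_rfl hx.2 hw)
    · apply ContinuousOn.intervalIntegrable
      apply hm'cont.mono
      rw [uIcc_of_le hx.1]
      exact Icc_subset_Icc le_rfl hx.2
  -- pointwise decomposition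
  have hdecomp : ∀ᵐ ω ∂μ, mt (W ω) * (W ω - E)
      = m 0 * (W ω - E)
        + (m dL - m 0) * ({ω' | 0 < W ω'}.indicator (fun ω' => W ω' - E) ω)
        + G ω := by
    filter_upwards [hval] with ω hω
    rcases hω with h0 | hIcc
    · have hG0 : G ω = 0 := by
        simp only [hGdef, hνdef]
        rw [show (∫ w, F (ω, w) ∂(volume.restrict (Ioc dL dU)))
            = ∫ w in Ioc dL dU, F (ω, w) from rfl]
        rw [setIntegral_congr_fun measurableSet_Ioc (g := fun _ => (0:ℝ)) ?_, integral_zero]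
        intro w hw
        simp only [hFdef]
        rw [if_neg]
        rw [h0]
        exact not_le.mpr (hdL.trans hw.1)
      have hind : ({ω' | 0 < W ω'}.indicator (fun ω' => W ω' - E) ω) = 0 := by
        apply indicator_of_notMem
        simp only [mem_setOf_eq, h0]
        exact lt_irrefl 0
      rw [hG0, hind, h0]
      simp only [hmtdef, if_pos rfl]
      ring
    · have hWpos : 0 < W ω := lt_of_lt_of_le hdL hIcc.1
      have hmt : mt (W ω) = m (W ω) := by
        simp only [hmtdef, if_neg (ne_of_gt hWpos)]
        rw [hc_id _ hIcc]
      have hind : ({ω' | 0 < W ω'}.indicator (fun ω' => W ω' - E) ω) = W ω - E := by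
        simp only [Set.indicator_apply, Set.mem_setOf_eq, if_pos hWpos]
      have hG : G ω = (m (W ω) - m dL) * (W ω - E) := by
        simp only [hGdef, hνdef]
        have heq : ∀ w, F (ω, w) = (Iic (W ω)).indicator (fun w => M w * (W ω - E)) w := by
          intro w
          simp only [hFdef, indicator_apply, mem_Iic]
        rw [show (∫ w, F (ω, w) ∂(volume.restrict (Ioc dL dU)))
            = ∫ w in Ioc dL dU, F (ω, w) from rfl]
        simp_rw [heq]
        rw [setIntegral_indicator measurableSet_Iic]
        rw [Set.Ioc_inter_Iic, min_eq_right hIcc.2]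
        rw [integral_mul_const]
        congr 1
        rw [← intervalIntegral.integral_of_le hIcc.1]
        rw [intervalIntegral.integral_congr (g := m') ?_]
        · exact hFTC _ hIcc
        · intro w hw
          rw [uIcc_of_le hIcc.1] at hw
          exact hMeq w (Icc_subset_Icc le_rfl hIcc.2 hw)
      rw [hmt, hind, hG]
      ring
  -- integrate the decomposition
  have hs₀ : MeasurableSet {ω | 0 < W ω} := measurableSet_lt measurable_const hWmeas
  have int_t2 : Integrable ({ω' | 0 < W ω'}.indicator (fun ω' => W ω' - E)) μ :=
    int_WsubE.indicator hs₀
  have hint_lhs : (∫ ω, mt (W ω) * (W ω - E) ∂μ)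
      = (∫ ω, Y ω * W ω ∂μ) - (∫ ω, Y ω ∂μ) * E := by
    have h1 : (fun ω => mt (W ω) * (W ω - E)) = fun ω => mt (W ω) * W ω - mt (W ω) * E := by
      funext ω; ring
    rw [h1, integral_sub int_mtWW (int_mtW.mul_const E), integral_mul_const,
      hEYW, hEY]
  have hI0 : (∫ ω, ({ω' | 0 < W ω'}.indicator (fun ω' => W ω' - E)) ω ∂μ)
      = (∫ ω in {ω | 0 < W ω}, W ω ∂μ) - E * (μ {ω | 0 < W ω}).toReal := by
    rw [integral_indicator hs₀]
    rw [integral_sub hWint.integrableOn (integrable_const E).integrableOn]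
    rw [setIntegral_const, smul_eq_mul, mul_comm]
    rfl
  have hinner : ∀ w : ℝ, (∫ ω, F (ω, w) ∂μ)
      = M w * ((∫ ω in {ω | w ≤ W ω}, W ω ∂μ) - E * (μ {ω | w ≤ W ω}).toReal) := by
    intro w
    have hsw : MeasurableSet {ω | w ≤ W ω} := measurableSet_le measurable_const hWmeas
    have heq : ∀ ω, F (ω, w) = ({ω' | w ≤ W ω'}.indicator (fun ω' => M w * (W ω' - E))) ω := by
      intro ω
      simp only [hFdef, indicator_apply, mem_setOf_eq]
    simp_rw [heq]
    rw [integral_indicator hsw, integral_const_mul]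
    congr 1
    rw [integral_sub hWint.integrableOn (integrable_const E).integrableOn]
    rw [setIntegral_const, smul_eq_mul, mul_comm]
    rfl
  have hswap : (∫ ω, G ω ∂μ)
      = ∫ w in dL..dU, M w * ((∫ ω in {ω | w ≤ W ω}, W ω ∂μ)
          - E * (μ {ω | w ≤ W ω}).toReal) := by
    have h1 : (∫ ω, G ω ∂μ) = ∫ w, (∫ ω, F (ω, w) ∂μ) ∂ν := by
      exact integral_integral_swap hFint
    rw [h1]
    simp_rw [hinner]
    rw [hνdef, intervalIntegral.integral_of_le hdLU]
  -- the key identity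
  have hkey : (∫ ω, Y ω * W ω ∂μ) - (∫ ω, Y ω ∂μ) * E
      = (m dL - m 0) * ((∫ ω in {ω | 0 < W ω}, W ω ∂μ) - E * (μ {ω | 0 < W ω}).toReal)
        + ∫ w in dL..dU, M w * ((∫ ω in {ω | w ≤ W ω}, W ω ∂μ)
            - E * (μ {ω | w ≤ W ω}).toReal) := by
    rw [← hint_lhs, integral_congr_ae hdecomp]
    rw [integral_add (by exact (int_WsubE.const_mul (m 0)).add (int_t2.const_mul (m dL - m 0))) hGint]
    rw [integral_add (by exact int_WsubE.const_mul (m 0)) (by exact int_t2.const_mul (m dL - m 0))]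
    rw [integral_const_mul (m 0), integral_const_mul (m dL - m 0)]
    rw [integral_sub hWint (integrable_const E), integral_const]
    simp only [probReal_univ, measure_univ, ENNReal.toReal_one, smul_eq_mul, one_mul, ← hEdef,
      sub_self, mul_zero, zero_add]
    rw [hI0, hswap]
  -- finish: algebraic manipulation of the RHS
  have hterm1 : (∫ w in dL..dU,
        ((∫ ω in {ω | w ≤ W ω}, W ω ∂μ) / (μ {ω | w ≤ W ω}).toReal - E)
          * (μ {ω | w ≤ W ω}).toReal / V * m' w)
      = (∫ w in dL..dU, M w * ((∫ ω in {ω | w ≤ W ω}, W ω ∂μ)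
          - E * (μ {ω | w ≤ W ω}).toReal)) / V := by
    rw [← intervalIntegral.integral_div]
    apply intervalIntegral.integral_congr
    intro w hw
    dsimp only
    rw [uIcc_of_le hdLU] at hw
    set I := ∫ ω in {ω | w ≤ W ω}, W ω ∂μ with hIdef
    set P := (μ {ω | w ≤ W ω}).toReal with hPdef
    rw [hMeq w hw]
    by_cases hP : P = 0
    · have hμ0 : μ {ω | w ≤ W ω} = 0 := by
        rw [hPdef] at hP
        exact (ENNReal.toReal_eq_zero_iff _).mp hP |>.resolve_right (measure_ne_top μ _)
      have hI0' : I = 0 := by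
        rw [hIdef, Measure.restrict_eq_zero.mpr hμ0, integral_zero_measure]
      rw [hP, hI0']
      simp
    · have h1 : (I / P - E) * P = I - E * P := by
        rw [sub_mul, div_mul_cancel₀ _ hP]
      rw [h1]
      ring
  have hterm2 : ((∫ ω in {ω | 0 < W ω}, W ω ∂μ) / (μ {ω | 0 < W ω}).toReal - E)
        * (μ {ω | 0 < W ω}).toReal * dL / V * ((m dL - m 0) / dL)
      = (m dL - m 0) * ((∫ ω in {ω | 0 < W ω}, W ω ∂μ)
          - E * (μ {ω | 0 < W ω}).toReal) / V := by
    have hP0ne : (μ {ω | 0 < W ω}).toReal ≠ 0 := ne_of_gt hppos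
    field_simp
  rw [hterm1, hterm2, ← add_div, hkey, add_comm]
end

section
/- For a mean-zero random variable W with density f and finite variance, the function v(w) = ∫_{-∞}^{w} m f(m) dm satisfies v(w) ≤ 0 for all w, v(w) → 0 as w → ±∞, and −v(w)/Var(W) integrates to 1 over ℝ; hence q(w) = −v(w)/Var(W) is a probability density on ℝ. -/
open MeasureTheory Filter Topology Set

/-- for a mean-zero density f with positive finite variance,
v(w) = ∫_{-∞}^{w} m f(m) dm satisfies v ≤ 0, v → 0 at ±∞, and
q(w) = −v(w)/Var integrates to one, hence q is a probability density. -/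
theorem stmt13
    (f : ℝ → ℝ) (hf0 : ∀ x, 0 ≤ f x)
    (hfdens : (∫ x, f x) = 1)
    (hfint : Integrable f)
    (hmint : Integrable (fun m => m * f m))
    (hm2int : Integrable (fun m => m ^ 2 * f m))
    (hmean : (∫ m, m * f m) = 0)
    (hVarpos : 0 < ∫ m, m ^ 2 * f m)
    (v q : ℝ → ℝ)
    (hv : ∀ w, v w = ∫ m in Set.Iic w, m * f m)
    (hq : ∀ w, q w = -v w / ∫ m, m ^ 2 * f m) :
    (∀ w, v w ≤ 0) ∧
    Tendsto v atTop (𝓝 0) ∧ Tendsto v atBot (𝓝 0) ∧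
    (∫ w, q w) = 1 ∧ (∀ w, 0 ≤ q w) := by
  set Var : ℝ := ∫ m, m ^ 2 * f m with hVar
  -- splitting of the full integral
  have hsplit : ∀ w : ℝ, v w + ∫ m in Set.Ioi w, m * f m = 0 := by
    intro w
    have := integral_add_compl (measurableSet_Iic (a := w)) hmint
    rw [compl_Iic] at this
    rw [hv w, this, hmean]
  -- v ≤ 0
  have hvle : ∀ w, v w ≤ 0 := by
    intro w
    rcases le_or_gt w 0 with hw | hw
    · rw [hv w]
      have : ∀ m ∈ Set.Iic w, m * f m ≤ 0 := fun m hm =>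
        mul_nonpos_of_nonpos_of_nonneg (le_trans hm hw) (hf0 m)
      have h1 : 0 ≤ ∫ m in Set.Iic w, -(m * f m) := by
        apply setIntegral_nonneg measurableSet_Iic
        intro m hm
        have := this m hm
        linarith
      rw [integral_neg] at h1
      linarith
    · have h1 : v w = - ∫ m in Set.Ioi w, m * f m := by linarith [hsplit w]
      rw [h1, neg_nonpos]
      apply setIntegral_nonneg measurableSet_Ioi
      intro m hm
      exact mul_nonneg (le_of_lt (lt_trans hw hm)) (hf0 m)
  refine ⟨hvle, ?_, ?_, ?_, ?_⟩
  · -- v → 0 at atTop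
    have hcov : AECover (volume : Measure ℝ) atTop (fun w : ℝ => Set.Iic w) :=
      aecover_Iic tendsto_id
    have := hcov.integral_tendsto_of_countably_generated hmint
    rw [hmean] at this
    exact this.congr fun w => (hv w).symm
  · -- v → 0 at atBot
    have hcov : AECover (volume : Measure ℝ) atBot (fun w : ℝ => Set.Ioi w) :=
      aecover_Ioi tendsto_id
    have h := hcov.integral_tendsto_of_countably_generated hmint
    rw [hmean] at h
    have h2 : Tendsto (fun w => -∫ m in Set.Ioi w, m * f m) atBot (𝓝 (-0)) := h.neg
    rw [neg_zero] at h2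
    refine h2.congr fun w => ?_
    linarith [hsplit w]
  · -- ∫ q = 1 via Fubini
    -- the kernel
    set S : Set (ℝ × ℝ) := {p : ℝ × ℝ | (p.1 < 0 ∧ p.2 ≤ p.1) ∨ (0 ≤ p.1 ∧ p.1 < p.2)} with hS
    have memS : ∀ w m : ℝ, ((w, m) ∈ S ↔ (w < 0 ∧ m ≤ w) ∨ (0 ≤ w ∧ w < m)) :=
      fun w m => Iff.rfl
    have hSmeas : MeasurableSet S := by
      have : S = ({p : ℝ × ℝ | p.1 < 0} ∩ {p | p.2 ≤ p.1}) ∪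
          ({p : ℝ × ℝ | 0 ≤ p.1} ∩ {p | p.1 < p.2}) := by
        ext p; simp only [hS, Set.mem_setOf_eq, Set.mem_union, Set.mem_inter_iff]
      rw [this]
      exact ((measurableSet_lt measurable_fst measurable_const).inter
        (measurableSet_le measurable_snd measurable_fst)).union
        ((measurableSet_le measurable_const measurable_fst).inter
        (measurableSet_lt measurable_fst measurable_snd))
    set F : ℝ × ℝ → ℝ := S.indicator (fun p => |p.2| * f p.2) with hF
    have hFnonneg : ∀ p, 0 ≤ F p := by
      intro p
      apply Set.indicator_nonneg
      intro p _
      exact mul_nonneg (abs_nonneg _) (hf0 _)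
    have hFmeas : AEStronglyMeasurable F (volume.prod volume) := by
      apply AEStronglyMeasurable.indicator _ hSmeas
      have habs : AEStronglyMeasurable (fun m : ℝ => |m| * f m) volume :=
        continuous_abs.aestronglyMeasurable.mul hfint.1
      exact habs.comp_snd
    -- the slice in w for fixed m
    have hslice_w : ∀ m : ℝ, (fun w => F (w, m)) =
        (Set.Ico (min m 0) (max m 0)).indicator (fun _ => |m| * f m) := by
      intro m
      funext w
      rcases le_or_gt m 0 with hm | hm
      · have : min m 0 = m ∧ max m 0 = 0 := ⟨min_eq_left hm, max_eq_right hm⟩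
        rw [this.1, this.2]
        by_cases hw : w ∈ Set.Ico m 0
        · rw [Set.indicator_of_mem hw]
          have : (w, m) ∈ S := (memS w m).mpr (Or.inl ⟨hw.2, hw.1⟩)
          rw [hF, Set.indicator_of_mem this]
        · rw [Set.indicator_of_notMem hw]
          have : (w, m) ∉ S := by
            intro hmem
            rcases (memS w m).mp hmem with ⟨h1, h2⟩ | ⟨h1, h2⟩
            · exact hw ⟨h2, h1⟩
            · linarith
          rw [hF, Set.indicator_of_notMem this]
      · have : min m 0 = 0 ∧ max m 0 = m := ⟨min_eq_right hm.le, max_eq_left hm.le⟩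
        rw [this.1, this.2]
        by_cases hw : w ∈ Set.Ico 0 m
        · rw [Set.indicator_of_mem hw]
          have : (w, m) ∈ S := (memS w m).mpr (Or.inr ⟨hw.1, hw.2⟩)
          rw [hF, Set.indicator_of_mem this]
        · rw [Set.indicator_of_notMem hw]
          have : (w, m) ∉ S := by
            intro hmem
            rcases (memS w m).mp hmem with ⟨h1, h2⟩ | ⟨h1, h2⟩
            · linarith
            · exact hw ⟨h1, h2⟩
          rw [hF, Set.indicator_of_notMem this]
    have hslice_w_int : ∀ m : ℝ, Integrable (fun w => F (w, m)) volume := by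
      intro m
      rw [hslice_w m]
      exact (integrableOn_const measure_Ico_lt_top.ne).integrable_indicator
        measurableSet_Ico
    have hslice_w_integral : ∀ m : ℝ, (∫ w, F (w, m)) = m ^ 2 * f m := by
      intro m
      rw [hslice_w m, integral_indicator measurableSet_Ico, setIntegral_const,
        Real.volume_real_Ico, smul_eq_mul]
      rcases le_or_gt m 0 with hm | hm
      · rw [min_eq_left hm, max_eq_right hm, max_eq_left (by linarith)]
        have : |m| = -m := abs_of_nonpos hm
        rw [this]; ring
      · rw [min_eq_right hm.le, max_eq_left hm.le, max_eq_left (by linarith)]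
        have : |m| = m := abs_of_pos hm
        rw [this]; ring
    -- integrability of F on the product
    have hFint : Integrable F (volume.prod volume) := by
      rw [show F = fun p : ℝ × ℝ => F (p.1, p.2) from rfl]
      rw [integrable_prod_iff' hFmeas]
      constructor
      · exact Eventually.of_forall hslice_w_int
      · have : (fun m => ∫ w, ‖F (w, m)‖) = fun m => m ^ 2 * f m := by
          funext m
          rw [← hslice_w_integral m]
          congr 1
          funext w
          exact Real.norm_of_nonneg (hFnonneg _)
        rw [this]
        exact hm2int
    -- the slice in m for fixed w equals -v w
    have hslice_m_integral : ∀ w : ℝ, (∫ m, F (w, m)) = -v w := by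
      intro w
      rcases lt_or_ge w 0 with hw | hw
      · have hset : (fun m => F (w, m)) = (Set.Iic w).indicator (fun m => |m| * f m) := by
          funext m
          by_cases hm : m ∈ Set.Iic w
          · rw [Set.indicator_of_mem hm]
            exact Set.indicator_of_mem ((memS w m).mpr (Or.inl ⟨hw, hm⟩)) _
          · rw [Set.indicator_of_notMem hm]
            apply Set.indicator_of_notMem
            intro hmem
            rcases (memS w m).mp hmem with ⟨h1, h2⟩ | ⟨h1, h2⟩
            · exact hm h2
            · linarith
        rw [hset, integral_indicator measurableSet_Iic]
        have : ∀ m ∈ Set.Iic w, |m| * f m = -(m * f m) := by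
          intro m hm
          rw [abs_of_nonpos (le_trans hm hw.le)]; ring
        rw [setIntegral_congr_fun measurableSet_Iic this, integral_neg, hv w]
      · have hset : (fun m => F (w, m)) = (Set.Ioi w).indicator (fun m => |m| * f m) := by
          funext m
          by_cases hm : m ∈ Set.Ioi w
          · rw [Set.indicator_of_mem hm]
            exact Set.indicator_of_mem ((memS w m).mpr (Or.inr ⟨hw, hm⟩)) _
          · rw [Set.indicator_of_notMem hm]
            apply Set.indicator_of_notMem
            intro hmem
            rcases (memS w m).mp hmem with ⟨h1, h2⟩ | ⟨h1, h2⟩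
            · linarith
            · exact hm h2
        rw [hset, integral_indicator measurableSet_Ioi]
        have : ∀ m ∈ Set.Ioi w, |m| * f m = m * f m := by
          intro m hm
          rw [abs_of_pos (lt_of_le_of_lt hw hm)]
        rw [setIntegral_congr_fun measurableSet_Ioi this]
        linarith [hsplit w]
    -- Fubini
    have hswap := integral_integral_swap (f := fun w m => F (w, m))
      (μ := (volume : Measure ℝ)) (ν := (volume : Measure ℝ)) hFint
    have key : (∫ w, -v w) = Var := by
      calc (∫ w, -v w) = ∫ w, ∫ m, F (w, m) := by
            congr 1; funext w; exact (hslice_m_integral w).symm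
        _ = ∫ m, ∫ w, F (w, m) := hswap
        _ = ∫ m, m ^ 2 * f m := by
            congr 1; funext m; exact hslice_w_integral m
        _ = Var := rfl
    have : (∫ w, q w) = (∫ w, -v w) / Var := by
      rw [show (fun w => q w) = fun w => (-v w) / Var from funext fun w => hq w]
      exact integral_div Var (fun w => -v w)
    rw [this, key, div_self (ne_of_gt hVarpos)]
  · -- q ≥ 0
    intro w
    rw [hq w]
    apply div_nonneg _ hVarpos.le
    linarith [hvle w]
end

section
/- Under strong parallel trends for a continuous treatment, the conditional contrast identifies the unconditional dose effect: if E[Y¹(w) − Y¹(0) | W = w] = E[Y¹(w) − Y¹(0)] for all w, and the counterfactual condition E[Y¹(0) | W = w] = E[Y⁰(0) | W = w] holds, then E[Y¹ − Y⁰ | W = w] = E[Y¹(w) − Y¹(0)], where Y¹ = Y¹(W) and Y⁰ = Y⁰(0). -/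
open MeasureTheory

/-- under strong parallel trends for a continuous treatment and
control validity, the conditional contrast identifies the unconditional dose
effect: E[Y¹ − Y⁰ | W = w] = E[Y¹(w) − Y¹(0)], where Y¹ = Y¹(W), Y⁰ = Y⁰(0).
Conditional expectations given W = w are encoded through factorizations of
conditional expectations given σ(W). -/
theorem stmt19
    {α : Type*} [MeasurableSpace α] (μ : Measure α) [IsProbabilityMeasure μ]
    (Y1 : ℝ → α → ℝ) (Y00 W : α → ℝ) (hWmeas : Measurable W)
    (hY1int : ∀ w, Integrable (Y1 w) μ) (hY00int : Integrable Y00 μ)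
    (hY1obsint : Integrable (fun ω => Y1 (W ω) ω) μ)
    -- factorized conditional means given σ(W):
    (e1 e2 e3 eD : ℝ → ℝ)
    -- e1(w) = E[Y¹(w) − Y¹(0) | W = w]:
    (he1 : μ[fun ω => Y1 (W ω) ω - Y1 0 ω |
        MeasurableSpace.comap W (inferInstance : MeasurableSpace ℝ)]
      =ᵐ[μ] fun ω => e1 (W ω))
    -- e2(w) = E[Y¹(0) | W = w]:
    (he2 : μ[fun ω => Y1 0 ω |
        MeasurableSpace.comap W (inferInstance : MeasurableSpace ℝ)]
      =ᵐ[μ] fun ω => e2 (W ω))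
    -- e3(w) = E[Y⁰(0) | W = w]:
    (he3 : μ[Y00 | MeasurableSpace.comap W (inferInstance : MeasurableSpace ℝ)]
      =ᵐ[μ] fun ω => e3 (W ω))
    -- eD(w) = E[Y¹ − Y⁰ | W = w] with Y¹ = Y¹(W), Y⁰ = Y⁰(0):
    (heD : μ[fun ω => Y1 (W ω) ω - Y00 ω |
        MeasurableSpace.comap W (inferInstance : MeasurableSpace ℝ)]
      =ᵐ[μ] fun ω => eD (W ω))
    -- (i) strong parallel trends: E[Y¹(w) − Y¹(0)|W=w] = E[Y¹(w) − Y¹(0)]: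
    (hspt : ∀ w, e1 w = ∫ ω, (Y1 w ω - Y1 0 ω) ∂μ)
    -- (ii) control validity: E[Y¹(0)|W=w] = E[Y⁰(0)|W=w]:
    (hcv : ∀ w, e2 w = e3 w) :
    (fun ω => eD (W ω))
      =ᵐ[μ] fun ω => ∫ ω', (Y1 (W ω) ω' - Y1 0 ω') ∂μ := by

  have hsub : μ[fun ω => Y1 (W ω) ω - Y00 ω |
      MeasurableSpace.comap W (inferInstance : MeasurableSpace ℝ)]
      =ᵐ[μ] (μ[fun ω => Y1 (W ω) ω - Y1 0 ω |
        MeasurableSpace.comap W (inferInstance : MeasurableSpace ℝ)]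
      + μ[fun ω => Y1 0 ω |
        MeasurableSpace.comap W (inferInstance : MeasurableSpace ℝ)]
      - μ[Y00 | MeasurableSpace.comap W (inferInstance : MeasurableSpace ℝ)]) := by
    have h1 : (fun ω => Y1 (W ω) ω - Y00 ω)
        = (fun ω => (Y1 (W ω) ω - Y1 0 ω) + Y1 0 ω) - Y00 := by
      funext ω; simp
    rw [h1]
    have hint1 : Integrable (fun ω => (Y1 (W ω) ω - Y1 0 ω) + Y1 0 ω) μ := by
      have := (hY1obsint.sub (hY1int 0)).add (hY1int 0)
      simpa using this
    refine (condExp_sub hint1 hY00int _).trans ?_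
    refine Filter.EventuallyEq.sub ?_ (Filter.EventuallyEq.refl _ _)
    exact condExp_add (hY1obsint.sub (hY1int 0)) (hY1int 0) _
  have hcomb : (μ[fun ω => Y1 (W ω) ω - Y1 0 ω |
        MeasurableSpace.comap W (inferInstance : MeasurableSpace ℝ)]
      + μ[fun ω => Y1 0 ω |
        MeasurableSpace.comap W (inferInstance : MeasurableSpace ℝ)]
      - μ[Y00 | MeasurableSpace.comap W (inferInstance : MeasurableSpace ℝ)])
      =ᵐ[μ] fun ω => e1 (W ω) := by
    filter_upwards [he1, he2, he3] with ω h1 h2 h3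
    simp only [Pi.add_apply, Pi.sub_apply, h1, h2, h3, hcv (W ω)]; ring
  have hfin : (fun ω => eD (W ω)) =ᵐ[μ] fun ω => e1 (W ω) :=
    heD.symm.trans (hsub.trans hcomb)
  filter_upwards [hfin] with ω h
  rw [h, hspt (W ω)]
end
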